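/- Let M be a loopless matroid on a finite ground set E and let ω ∈ ℝ^E. Then for every e ∈ E, the subdominant M-ultrametric satisfies ω^M_e = max over all cocircuits C* of M containing e of (min_{f ∈ C*} ω_f). (The 'blue rule' computes the subdominant M-ultrametric.) -/

import Mathlib

open scoped Classical

variable {α : Type*}

/-- The ω-weight of a set of elements: the sum of ω over the set. -/
noncomputable def wSum (ω : α → ℝ) (B : Set α) : ℝ := ∑ᶠ e ∈ B, ω e

/-- `B` is an ω-minimum basis of `M`: a basis whose ω-weight is minimum among all bases. -/
def IsMinBase [Fintype α] (M : Matroid α) (ω : α → ℝ) (B : Set α) : Prop :=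
  M.IsBase B ∧ ∀ B' : Set α, M.IsBase B' → wSum ω B ≤ wSum ω B'

/-- `ω` lies in the Bergman fan of `M`: every element lies in some ω-minimum basis. -/
def InBergmanFan [Fintype α] (M : Matroid α) (ω : α → ℝ) : Prop :=
  ∀ e : α, ∃ B : Set α, IsMinBase M ω B ∧ e ∈ B

/-- `C` is a circuit of `M`: a minimal dependent set. -/
def IsCircuit (M : Matroid α) (C : Set α) : Prop := Minimal M.Dep C

/-- A cocircuit of `M` is a circuit of the dual matroid `M✶`. -/
def IsCocircuit (M : Matroid α) (C : Set α) : Prop := IsCircuit M✶ C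

open Set Matroid

lemma wSum_insert [Fintype α] (ω : α → ℝ) {B : Set α} {f : α} (hf : f ∉ B) :
    wSum ω (insert f B) = ω f + wSum ω B :=
  finsum_mem_insert ω hf (Set.toFinite B)

lemma wSum_diff [Fintype α] (ω : α → ℝ) {B : Set α} {e : α} (he : e ∈ B) :
    wSum ω (B \ {e}) = wSum ω B - ω e := by
  have hBeq : B = insert e (B \ {e}) := by
    rw [Set.insert_diff_singleton, Set.insert_eq_of_mem he]
  have h2 : wSum ω B = ω e + wSum ω (B \ {e}) := by
    conv_lhs => rw [hBeq]
    exact finsum_mem_insert ω (by simp) (Set.toFinite _)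
  linarith

/-- swap formula for weights -/
lemma wSum_swap [Fintype α] (ω : α → ℝ) {B : Set α} {e f : α} (he : e ∈ B) (hf : f ∉ B) :
    wSum ω (insert f (B \ {e})) = wSum ω B - ω e + ω f := by
  rw [wSum_insert ω (fun h => hf h.1), wSum_diff ω he]
  ring

/-- a min base swap inequality -/
lemma minBase_swap [Fintype α] {M : Matroid α} {u : α → ℝ} {B : Set α}
    (hB : IsMinBase M u B) {e f : α} (he : e ∈ B) (hf : f ∉ B)
    (hbase : M.IsBase (insert f (B \ {e}))) : u e ≤ u f := by
  have h := hB.2 _ hbase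
  rw [wSum_swap u he hf] at h
  linarith

lemma not_base_diff_singleton [Fintype α] {M : Matroid α} {B : Set α} (hB : M.IsBase B)
    {e : α} (he : e ∈ B) : ¬ M.IsBase (B \ {e}) := by
  intro h
  have h1 := h.ncard_eq_ncard_of_isBase hB
  have h2 : (B \ {e}).ncard < B.ncard :=
    Set.ncard_diff_singleton_lt_of_mem he (Set.toFinite B)
  omega

/-- The fundamental cocircuit of `e` with respect to a base `B`. -/
lemma fund_cocircuit [Fintype α] {M : Matroid α} (hE : M.E = Set.univ) {B : Set α}
    (hB : M.IsBase B) {e : α} (he : e ∈ B) :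
    _root_.IsCocircuit M {f | M.IsBase (insert f (B \ {e}))} ∧
      ∀ f ∈ {f | M.IsBase (insert f (B \ {e}))}, f ∈ B → f = e := by
  set C := {f | M.IsBase (insert f (B \ {e}))} with hC
  have heC : e ∈ C := by
    simp only [hC, mem_setOf_eq, Set.insert_diff_singleton, Set.insert_eq_of_mem he]
    exact hB
  have hCB : ∀ f ∈ C, f ∈ B → f = e := by
    intro f hfC hfB
    by_contra hne
    have : insert f (B \ {e}) = B \ {e} := Set.insert_eq_of_mem ⟨hfB, hne⟩
    rw [mem_setOf_eq, this] at hfC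
    exact not_base_diff_singleton hB he hfC
  refine ⟨⟨?_, ?_⟩, hCB⟩
  · -- C is dual-dependent : meets every base
    rw [dual_dep_iff_forall]
    refine ⟨fun B' hB' => ?_, by rw [hE]; exact subset_univ _⟩
    by_cases heB' : e ∈ B'
    · exact ⟨e, heC, heB'⟩
    · obtain ⟨f, hf, hfb⟩ := hB.exchange hB' ⟨he, heB'⟩
      exact ⟨f, hfb, hf.1⟩
  · -- minimality
    intro D hD hDC
    by_contra hCD
    obtain ⟨f, hfC, hfD⟩ := Set.not_subset.1 hCD
    have hBf : M.IsBase (insert f (B \ {e})) := hfC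
    rw [dual_dep_iff_forall] at hD
    obtain ⟨g, hgD, hgBf⟩ := hD.1 _ hBf
    have hgC : g ∈ C := hDC hgD
    have hgf : g ≠ f := fun h => hfD (h ▸ hgD)
    have hgB : g ∈ B ∧ g ≠ e := by
      rcases (Set.mem_insert_iff.1 hgBf) with h | h
      · exact absurd h hgf
      · exact ⟨h.1, h.2⟩
    exact hgB.2 (hCB g hgC hgB.1)

/-- every element of a loopless matroid on `univ` lies in a cocircuit -/
lemma exists_cocircuit [Fintype α] {M : Matroid α} (hE : M.E = Set.univ)
    (hloopless : ∀ e : α, M.Indep {e}) (x : α) : ∃ C, _root_.IsCocircuit M C ∧ x ∈ C := by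
  obtain ⟨B, hB, hxB⟩ := Matroid.indep_iff.1 (hloopless x)
  have hxB : x ∈ B := hxB rfl
  have hBc : M✶.IsBase (Set.univ \ B) := by
    have := hB.compl_isBase_dual
    rwa [hE] at this
  have hxBc : x ∉ Set.univ \ B := fun h => h.2 hxB
  have hdep : M✶.Dep (insert x (Set.univ \ B)) :=
    hBc.insert_dep ⟨by simp [hE], hxBc⟩
  -- take a dep subset of minimal cardinality
  have hfin : ({D : Set α | D ⊆ insert x (Set.univ \ B) ∧ M✶.Dep D}).Finite :=
    Set.toFinite _
  obtain ⟨C, hCmem, hCmin⟩ := Set.exists_min_image _ Set.ncard hfin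
    ⟨insert x (Set.univ \ B), Set.Subset.rfl, hdep⟩
  have hCdep : M✶.Dep C := hCmem.2
  have hCcirc : _root_.IsCocircuit M C := by
    refine ⟨hCdep, fun D hD hDC => ?_⟩
    have hDmem : D ∈ {D : Set α | D ⊆ insert x (Set.univ \ B) ∧ M✶.Dep D} :=
      ⟨hDC.trans hCmem.1, hD⟩
    have := hCmin D hDmem
    exact (Set.eq_of_subset_of_ncard_le hDC this (Set.toFinite C)).symm.subset
  refine ⟨C, hCcirc, ?_⟩
  by_contra hxC
  have hCsub : C ⊆ Set.univ \ B := by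
    intro y hy
    rcases Set.mem_insert_iff.1 (hCmem.1 hy) with h | h
    · exact absurd (h ▸ hy) hxC
    · exact h
  exact hCdep.not_indep (hBc.indep.subset hCsub)

lemma exists_minBase [Fintype α] (M : Matroid α) (u : α → ℝ) : ∃ B, IsMinBase M u B := by
  obtain ⟨B₀, hB₀⟩ := M.exists_isBase
  obtain ⟨B, hB, hmin⟩ := Set.exists_min_image {B | M.IsBase B} (wSum u) (Set.toFinite _) ⟨B₀, hB₀⟩
  exact ⟨B, hB, hmin⟩

/-- The blue rule: if `e` attains the minimum of `u` on a cocircuit, then `e` lies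
in some `u`-minimum base. -/
lemma blue_rule [Fintype α] {M : Matroid α} (hE : M.E = Set.univ) {u : α → ℝ} {C : Set α}
    (hC : _root_.IsCocircuit M C) {e : α} (heC : e ∈ C) (hmin : ∀ f ∈ C, u e ≤ u f) :
    ∃ B, IsMinBase M u B ∧ e ∈ B := by
  obtain ⟨B, hB⟩ := exists_minBase M u
  by_cases heB : e ∈ B
  · exact ⟨B, hB, heB⟩
  -- C \ {e} is coindependent
  have hCe_indep : M✶.Indep (C \ {e}) := by
    by_contra hnot
    have hdep : M✶.Dep (C \ {e}) :=
      Matroid.dep_iff.2 ⟨hnot, by rw [dual_ground, hE]; exact subset_univ _⟩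
    have := hC.2 hdep Set.diff_subset
    exact (this heC).2 rfl
  obtain ⟨-, B', hB', hdisj⟩ := Matroid.dual_indep_iff_exists'.1 hCe_indep
  -- get a base B'' containing B \ C inside (B \ C) ∪ B'
  obtain ⟨B'', hB'', hsub1, hsub2⟩ :=
    (hB.1.indep.subset Set.diff_subset).exists_isBase_subset_union_isBase hB'
  -- B'' meets C only possibly in e, but must meet C, so e ∈ B''
  have hmeet : (C ∩ B'').Nonempty := ((dual_dep_iff_forall).1 hC.1).1 _ hB''
  obtain ⟨g₀, hg₀C, hg₀B''⟩ := hmeet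
  have hg₀e : g₀ = e := by
    by_contra hne
    rcases hsub2 hg₀B'' with h | h
    · exact h.2 hg₀C
    · exact (Set.disjoint_left.1 hdisj ⟨hg₀C, hne⟩) h
  have heB'' : e ∈ B'' := hg₀e ▸ hg₀B''
  -- I := insert e (B \ C) is independent
  have hI : M.Indep (insert e (B \ C)) :=
    hB''.indep.subset (Set.insert_subset heB'' hsub1)
  obtain ⟨B₁, hB₁, hIB₁, hB₁sub⟩ := hI.exists_isBase_subset_union_isBase hB.1
  have hB₁sub' : B₁ ⊆ insert e B := by
    intro y hy
    rcases hB₁sub hy with h | h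
    · rcases Set.mem_insert_iff.1 h with h' | h'
      · exact h' ▸ Set.mem_insert _ _
      · exact Set.mem_insert_of_mem _ h'.1
    · exact Set.mem_insert_of_mem _ h
  have heB₁ : e ∈ B₁ := hIB₁ (Set.mem_insert _ _)
  -- find g ∈ B \ B₁
  have hcard : B₁.ncard = B.ncard := hB₁.ncard_eq_ncard_of_isBase hB.1
  have hne' : B₁ ≠ insert e B := by
    intro h
    have : (insert e B).ncard = B.ncard + 1 := Set.ncard_insert_of_notMem heB (Set.toFinite B)
    rw [h, this] at hcard
    omega
  obtain ⟨g, hg1, hg2⟩ : ∃ g, g ∈ insert e B ∧ g ∉ B₁ := by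
    by_contra h
    push_neg at h
    exact hne' (Set.Subset.antisymm hB₁sub' h)
  have hge : g ≠ e := fun h => hg2 (h ▸ heB₁)
  have hgB : g ∈ B := (Set.mem_insert_iff.1 hg1).resolve_left hge
  have hgC : g ∈ C := by
    by_contra h
    exact hg2 (hIB₁ (Set.mem_insert_of_mem _ ⟨hgB, h⟩))
  -- B₁ = insert e (B \ {g})
  have hB₁eq : B₁ = insert e (B \ {g}) := by
    apply Set.eq_of_subset_of_ncard_le
    · intro y hy
      rcases Set.mem_insert_iff.1 (hB₁sub' hy) with h | h
      · exact h ▸ Set.mem_insert _ _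
      · refine Set.mem_insert_of_mem _ ⟨h, ?_⟩
        intro hyg
        exact hg2 ((Set.mem_singleton_iff.1 hyg) ▸ hy)
    · have h1 : (insert e (B \ {g})).ncard = (B \ {g}).ncard + 1 :=
        Set.ncard_insert_of_notMem (fun h => heB h.1) (Set.toFinite _)
      have h2 : (B \ {g}).ncard + 1 = B.ncard := by
        rw [Set.ncard_diff_singleton_of_mem hgB]
        have : 0 < B.ncard := (Set.ncard_pos (Set.toFinite B)).2 ⟨g, hgB⟩
        omega
      omega
    · exact Set.toFinite _
  -- B₁ is a min base containing e
  have hwt : wSum u B₁ ≤ wSum u B := by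
    rw [hB₁eq, wSum_swap u hgB heB]
    have := hmin g hgC
    linarith
  exact ⟨B₁, ⟨hB₁, fun B₂ hB₂ => hwt.trans (hB.2 _ hB₂)⟩, heB₁⟩

/-- **blue rule.** For a loopless matroid M and ω ∈ ℝ^E, the subdominant
M-ultrametric satisfies, for every e,
ω^M_e = max over cocircuits C* containing e of (min_{f ∈ C*} ω_f). -/
theorem stmt4 [Fintype α] (M : Matroid α) (hE : M.E = Set.univ)
    (hloopless : ∀ e : α, M.Indep {e}) (ω usub : α → ℝ)
    (h1 : InBergmanFan M usub) (h2 : ∀ e, usub e ≤ ω e)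
    (h3 : ∀ u : α → ℝ, InBergmanFan M u → (∀ e, u e ≤ ω e) → ∀ e, u e ≤ usub e) :
    ∀ e : α, usub e =
      sSup {r : ℝ | ∃ C : Set α, _root_.IsCocircuit M C ∧ e ∈ C ∧ r = sInf (ω '' C)} := by
  set S : α → Set ℝ :=
    fun x => {r : ℝ | ∃ C : Set α, _root_.IsCocircuit M C ∧ x ∈ C ∧ r = sInf (ω '' C)} with hS
  have hSfin : ∀ x, (S x).Finite := by
    intro x
    have : S x ⊆ (fun C : Set α => sInf (ω '' C)) '' {C | _root_.IsCocircuit M C ∧ x ∈ C} := by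
      rintro r ⟨C, hC, hx, rfl⟩
      exact ⟨C, ⟨hC, hx⟩, rfl⟩
    exact Set.Finite.subset ((Set.toFinite _).image _) this
  have hSne : ∀ x, (S x).Nonempty := by
    intro x
    obtain ⟨C, hC, hx⟩ := exists_cocircuit hE hloopless x
    exact ⟨sInf (ω '' C), C, hC, hx, rfl⟩
  have hSle : ∀ x, ∀ r ∈ S x, r ≤ ω x := by
    rintro x r ⟨C, hC, hx, rfl⟩
    exact csInf_le (Set.Finite.bddBelow ((Set.toFinite C).image ω)) ⟨x, hx, rfl⟩
  set u : α → ℝ := fun x => sSup (S x) with hu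
  have huω : ∀ x, u x ≤ ω x := fun x => csSup_le (hSne x) (hSle x)
  have hufan : InBergmanFan M u := by
    intro x
    have hmem : u x ∈ S x := (hSne x).csSup_mem (hSfin x)
    obtain ⟨C, hC, hxC, hval⟩ := hmem
    refine blue_rule hE hC hxC (fun f hf => ?_)
    have : sInf (ω '' C) ∈ S f := ⟨C, hC, hf, rfl⟩
    calc u x = sInf (ω '' C) := hval
      _ ≤ sSup (S f) := le_csSup ((hSfin f).bddAbove) this
  intro e
  refine le_antisymm ?_ (h3 u hufan huω e)
  -- usub e ≤ sSup (S e) via the fundamental cocircuit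
  obtain ⟨B, hB, heB⟩ := h1 e
  obtain ⟨hCc, hCB⟩ := fund_cocircuit hE hB.1 heB
  set C := {f | M.IsBase (insert f (B \ {e}))} with hCdef
  have heC : e ∈ C := by
    simp only [hCdef, mem_setOf_eq, Set.insert_diff_singleton, Set.insert_eq_of_mem heB]
    exact hB.1
  have hkey : usub e ≤ sInf (ω '' C) := by
    apply le_csInf ⟨ω e, Set.mem_image_of_mem ω heC⟩
    rintro y ⟨f, hfC, rfl⟩
    by_cases hfB : f ∈ B
    · rw [hCB f hfC hfB]
      exact h2 e
    · exact (minBase_swap hB heB hfB hfC).trans (h2 f)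
  exact hkey.trans (le_csSup ((hSfin e).bddAbove) ⟨C, hCc, heC, rfl⟩)
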